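/- arXiv:2605.00360 — 4 statements merged into one kernel-verified Lean document; each statement's English description precedes it below -/
import Mathlib

section
/- Fix 0 ≤ s ≤ T, x_s ∈ ℕ^d, and let h(t,x) = P_{T−t}f(x) for f bounded away from 0 and ∞. Define g(t,x) := 1_{x_s ≤ x} · (h(t,x)/h(s,x_s)) · π_{t−s}(x − x_s) for t ∈ [s,T]. Then g solves the Kolmogorov forward equation ∂_t g(t,x) = ∑_{i=1}^d [ (h(t,x)/h(t,x−eᵢ)) g(t,x−eᵢ) − (h(t,x+eᵢ)/h(t,x)) g(t,x) ], with initial condition g(s,·) = δ_{x_s}. -/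
noncomputable def poisson (t : ℝ) (k : ℕ) : ℝ := Real.exp (-t) * t ^ k / k.factorial

noncomputable def poissonD (d : ℕ) (t : ℝ) (x : Fin d → ℕ) : ℝ := ∏ i, poisson t (x i)

/-- Poisson pmf extended to ℤ by 0 on negative integers. -/
noncomputable def poissonZ (t : ℝ) (k : ℤ) : ℝ :=
  if 0 ≤ k then Real.exp (-t) * t ^ k.toNat / (k.toNat).factorial else 0

noncomputable def poissonZd (d : ℕ) (t : ℝ) (x : Fin d → ℤ) : ℝ :=
  ∏ i, poissonZ t (x i)

/-- The Poisson semigroup acting at a point of ℤ^d: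
    P_t f(x) = ∑_{y ∈ ℕ^d} f(x+y) π_t(y). -/
noncomputable def PZ (d : ℕ) (t : ℝ) (f : (Fin d → ℤ) → ℝ) (x : Fin d → ℤ) : ℝ :=
  ∑' y : Fin d → ℕ, f (x + fun i => (y i : ℤ)) * poissonD d t y

/-- Candidate transition probabilities of the Poisson–Föllmer process:
    g(t,x) = 1_{x_s ≤ x} (h(t,x)/h(s,x_s)) π_{t-s}(x - x_s)
    with h(t,x) = P_{T-t}f(x). -/
noncomputable def gFun (d : ℕ) (T s : ℝ) (f : (Fin d → ℤ) → ℝ)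
    (xs : Fin d → ℤ) (t : ℝ) (x : Fin d → ℤ) : ℝ :=
  (if ∀ i, xs i ≤ x i then (1 : ℝ) else 0)
    * (PZ d (T - t) f x / PZ d (T - s) f xs) * poissonZd d (t - s) (x - xs)

lemma poissonZ_coe (t : ℝ) (m : ℕ) : poissonZ t (m : ℤ) = poisson t m := by
  simp [poissonZ, poisson]

lemma poissonZ_neg (t : ℝ) {k : ℤ} (hk : k < 0) : poissonZ t k = 0 := by
  simp [poissonZ, not_le.mpr hk]

lemma poissonD_eq (d : ℕ) (t : ℝ) (y : Fin d → ℕ) :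
    poissonD d t y = poissonZd d t (fun i => (y i : ℤ)) := by
  simp [poissonD, poissonZd, poissonZ_coe]

lemma hasDerivAt_poissonZ (n : ℤ) (hn : 0 ≤ n) (τ : ℝ) :
    HasDerivAt (fun u => poissonZ u n) (poissonZ τ (n - 1) - poissonZ τ n) τ := by
  obtain ⟨m, rfl⟩ := Int.eq_ofNat_of_zero_le hn
  have hfun : (fun u => poissonZ u (m : ℤ)) = fun u => Real.exp (-u) * u ^ m / m.factorial := by
    funext u; simp [poissonZ]
  rw [hfun]
  have h1 : HasDerivAt (fun u : ℝ => Real.exp (-u)) (-Real.exp (-τ)) τ := by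
    have h := (Real.hasDerivAt_exp (-τ)).comp τ ((hasDerivAt_id τ).neg)
    simp at h ⊢; exact h
  have h2 : HasDerivAt (fun u : ℝ => u ^ m) (m * τ ^ (m - 1)) τ := by
    simpa using hasDerivAt_pow m τ
  have h3 := (h1.mul h2).div_const (m.factorial : ℝ)
  replace h3 : HasDerivAt (fun u => Real.exp (-u) * u ^ m / m.factorial) _ τ := h3
  convert h3 using 1
  cases m with
  | zero => simp [poissonZ, poissonZ_neg]
  | succ k =>
      have hk : ((k : ℤ) + 1 - 1) = (k : ℤ) := by ring
      rw [show ((k + 1 : ℕ) : ℤ) - 1 = (k : ℤ) by push_cast; ring, poissonZ_coe, poissonZ_coe]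
      simp only [poisson, Nat.factorial_succ]
      have hkf : (k.factorial : ℝ) ≠ 0 := Nat.cast_ne_zero.mpr k.factorial_ne_zero
      field_simp
      push_cast; ring


lemma hasDerivAt_poissonZd (d : ℕ) (x : Fin d → ℤ) (hx : ∀ i, 0 ≤ x i) (τ : ℝ) :
    HasDerivAt (fun u => poissonZd d u x)
      (∑ i, (poissonZd d τ (x - Pi.single i 1) - poissonZd d τ x)) τ := by
  have h := HasDerivAt.finset_prod (𝕜 := ℝ) (x := τ) (u := Finset.univ)
    (f := fun i u => poissonZ u (x i))
    (f' := fun i => poissonZ τ (x i - 1) - poissonZ τ (x i))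
    (fun i _ => hasDerivAt_poissonZ (x i) (hx i) τ)
  have hfun : (∏ i ∈ Finset.univ, fun u => poissonZ u (x i)) = fun u => poissonZd d u x := by
    funext u; simp [poissonZd, Finset.prod_apply]
  rw [hfun] at h
  replace h : HasDerivAt (fun u => poissonZd d u x) _ τ := h
  convert h using 1
  apply Finset.sum_congr rfl
  intro i _
  have h1 : poissonZd d τ (x - Pi.single i 1)
      = (∏ j ∈ Finset.univ.erase i, poissonZ τ (x j)) * poissonZ τ (x i - 1) := by
    rw [poissonZd, ← Finset.prod_erase_mul _ _ (Finset.mem_univ i)]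
    congr 1
    · apply Finset.prod_congr rfl
      intro j hj
      have : (Pi.single i 1 : Fin d → ℤ) j = 0 := Pi.single_eq_of_ne (Finset.ne_of_mem_erase hj) 1
      simp [this]
    · simp
  have h2 : poissonZd d τ x
      = (∏ j ∈ Finset.univ.erase i, poissonZ τ (x j)) * poissonZ τ (x i) := by
    rw [poissonZd, ← Finset.prod_erase_mul _ _ (Finset.mem_univ i)]
  rw [h1, h2, smul_eq_mul]
  ring

section
variable {d : ℕ}

lemma summable_pi_prod {g : ℕ → ℝ} (hg0 : ∀ k, 0 ≤ g k) (hg : Summable g) :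
    Summable (fun y : Fin d → ℕ => ∏ i, g (y i)) := by
  have hts0 : 0 ≤ ∑' k, g k := tsum_nonneg hg0
  apply summable_of_sum_le (c := (∑' k, g k) ^ d)
  · intro y; exact Finset.prod_nonneg fun i _ => hg0 _
  · intro u
    set N : ℕ := u.sup (fun y => Finset.univ.sup y) with hN
    have hsub : u ⊆ Fintype.piFinset (fun _ : Fin d => Finset.range (N + 1)) := by
      intro y hy
      rw [Fintype.mem_piFinset]
      intro i
      rw [Finset.mem_range]
      have : y i ≤ N := le_trans (Finset.le_sup (Finset.mem_univ i))
        (Finset.le_sup (f := fun y : Fin d → ℕ => Finset.univ.sup y) hy)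
      omega
    calc ∑ y ∈ u, ∏ i, g (y i)
        ≤ ∑ y ∈ Fintype.piFinset (fun _ : Fin d => Finset.range (N + 1)), ∏ i, g (y i) :=
          Finset.sum_le_sum_of_subset_of_nonneg hsub
            (fun y _ _ => Finset.prod_nonneg fun i _ => hg0 _)
      _ = ∏ _i : Fin d, ∑ k ∈ Finset.range (N + 1), g k := by
          rw [Finset.prod_univ_sum]
      _ ≤ ∏ _i : Fin d, ∑' k, g k := by
          apply Finset.prod_le_prod
          · intro i _; exact Finset.sum_nonneg fun k _ => hg0 _
          · intro i _; exact Summable.sum_le_tsum _ (fun k _ => hg0 _) hg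
      _ = (∑' k, g k) ^ d := by simp

lemma abs_poissonZ_le {R u : ℝ} (hR : 1 ≤ R) (hu : |u| ≤ R) {k : ℤ} {m : ℕ}
    (h1 : k ≤ m) (h2 : (m : ℤ) ≤ k + 1) :
    |poissonZ u k| ≤ Real.exp R * (2 * R) ^ m / m.factorial := by
  have hR0 : (0:ℝ) < R := lt_of_lt_of_le one_pos hR
  have hrhs0 : 0 ≤ Real.exp R * (2 * R) ^ m / m.factorial := by positivity
  rcases lt_or_ge k 0 with hk | hk
  · rw [poissonZ_neg _ hk]; simpa using hrhs0
  · obtain ⟨n, rfl⟩ := Int.eq_ofNat_of_zero_le hk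
    have hnm : n ≤ m := by exact_mod_cast h1
    have hmn : m ≤ n + 1 := by exact_mod_cast h2
    rw [poissonZ_coe, poisson]
    have hexp : Real.exp (-u) ≤ Real.exp R := by
      apply Real.exp_le_exp.mpr
      have := abs_le.mp hu
      linarith [this.1]
    have habs : |Real.exp (-u) * u ^ n / n.factorial|
        = Real.exp (-u) * |u| ^ n / n.factorial := by
      rw [abs_div, abs_mul, abs_pow, abs_of_pos (Real.exp_pos _), Nat.abs_cast]
    rw [habs]
    -- |u|^n ≤ R^n ≤ R^m
    have hun : |u| ^ n ≤ R ^ n := pow_le_pow_left₀ (abs_nonneg _) hu n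
    -- key : R ^ n / n! ≤ (2R)^m / m!
    have hkey : R ^ n / n.factorial ≤ (2 * R) ^ m / m.factorial := by
      rw [div_le_div_iff₀ (by positivity) (by positivity)]
      have hfact : (m.factorial : ℝ) ≤ (n + 1) * n.factorial := by
        have : m.factorial ≤ (n + 1).factorial := Nat.factorial_le hmn
        calc (m.factorial : ℝ) ≤ ((n+1).factorial : ℝ) := by exact_mod_cast this
          _ = (n + 1) * n.factorial := by rw [Nat.factorial_succ]; push_cast; ring
      have h2m : (n : ℝ) + 1 ≤ 2 ^ m := by
        have : n + 1 ≤ 2 ^ m := le_trans Nat.lt_two_pow_self (Nat.pow_le_pow_right (by norm_num) hnm)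
        exact_mod_cast this
      have hRnm : R ^ n ≤ R ^ m := pow_le_pow_right₀ hR hnm
      calc R ^ n * m.factorial ≤ R ^ n * ((n + 1) * n.factorial) := by
            apply mul_le_mul_of_nonneg_left hfact (by positivity)
        _ = ((n:ℝ) + 1) * R ^ n * n.factorial := by ring
        _ ≤ (2 ^ m * R ^ m) * n.factorial := by
            apply mul_le_mul_of_nonneg_right _ (by positivity)
            calc ((n:ℝ) + 1) * R ^ n ≤ 2 ^ m * R ^ n :=
                  mul_le_mul_of_nonneg_right h2m (by positivity)
              _ ≤ 2 ^ m * R ^ m := mul_le_mul_of_nonneg_left hRnm (by positivity)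
        _ = (2 * R) ^ m * n.factorial := by rw [mul_pow]
    calc Real.exp (-u) * |u| ^ n / n.factorial
        ≤ Real.exp R * R ^ n / n.factorial := by gcongr
      _ = Real.exp R * (R ^ n / n.factorial) := by rw [mul_div_assoc]
      _ ≤ Real.exp R * ((2 * R) ^ m / m.factorial) :=
          mul_le_mul_of_nonneg_left hkey (le_of_lt (Real.exp_pos _))
      _ = Real.exp R * (2 * R) ^ m / m.factorial := by rw [mul_div_assoc]

end

section
variable {d : ℕ}

lemma abs_poissonZd_le {R u : ℝ} (hR : 1 ≤ R) (hu : |u| ≤ R) (y : Fin d → ℕ)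
    (z : Fin d → ℤ) (h1 : ∀ i, z i ≤ y i) (h2 : ∀ i, (y i : ℤ) ≤ z i + 1) :
    |poissonZd d u z| ≤ ∏ i, (Real.exp R * (2 * R) ^ (y i) / (y i).factorial) := by
  rw [poissonZd, Finset.abs_prod]
  apply Finset.prod_le_prod (fun i _ => abs_nonneg _)
  intro i _
  exact abs_poissonZ_le hR hu (h1 i) (h2 i)

lemma summable_expBound {R : ℝ} (hR : 0 ≤ R) :
    Summable (fun y : Fin d → ℕ => ∏ i, (Real.exp R * (2 * R) ^ (y i) / (y i).factorial)) := by
  have h2R : (0:ℝ) ≤ 2 * R := by linarith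
  simpa [mul_div_assoc] using summable_pi_prod (g := fun k => Real.exp R * ((2 * R) ^ k / k.factorial))
    (fun k => mul_nonneg (Real.exp_pos _).le
      (div_nonneg (pow_nonneg h2R k) (by positivity)))
    (Summable.mul_left _ (Real.summable_pow_div_factorial (2 * R)))

lemma summable_PZ (f : (Fin d → ℤ) → ℝ) (C : ℝ) (hfb : ∀ x, |f x| ≤ C)
    (x : Fin d → ℤ) (u : ℝ) :
    Summable (fun y : Fin d → ℕ => f (x + fun i => (y i : ℤ)) * poissonD d u y) := by
  set R := |u| + 1 with hRdef
  have hR : 1 ≤ R := by simp [hRdef]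
  have hu : |u| ≤ R := by simp [hRdef]
  apply Summable.of_norm_bounded (((summable_expBound (d := d) (by linarith : (0:ℝ) ≤ R))).mul_left C)
  intro y
  rw [Real.norm_eq_abs, abs_mul]
  have hC : 0 ≤ C := le_trans (abs_nonneg _) (hfb x)
  apply mul_le_mul (hfb _) _ (abs_nonneg _) hC
  rw [poissonD_eq]
  exact abs_poissonZd_le hR hu y _ (fun i => le_refl _) (fun i => by simp)

lemma poisson_nonneg {t : ℝ} (ht : 0 ≤ t) (k : ℕ) : 0 ≤ poisson t k := by
  unfold poisson; positivity

lemma poissonD_nonneg {t : ℝ} (ht : 0 ≤ t) (y : Fin d → ℕ) : 0 ≤ poissonD d t y :=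
  Finset.prod_nonneg fun i _ => poisson_nonneg ht _

lemma PZ_pos {f : (Fin d → ℤ) → ℝ} {c C : ℝ} (hc : 0 < c)
    (hf : ∀ x, c ≤ f x ∧ f x ≤ C) {u : ℝ} (hu : 0 ≤ u) (x : Fin d → ℤ) :
    0 < PZ d u f x := by
  have hfb : ∀ x, |f x| ≤ C := by
    intro x
    rcases hf x with ⟨h1, h2⟩
    rw [abs_of_pos (lt_of_lt_of_le hc h1)]; exact h2
  apply Summable.tsum_pos (summable_PZ f C hfb x u)
    (fun y => mul_nonneg (le_trans hc.le (hf _).1) (poissonD_nonneg hu y)) (fun _ => 0)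
  apply mul_pos (lt_of_lt_of_le hc (hf _).1)
  have : poissonD d u (fun _ => 0) = Real.exp (-u) ^ d := by
    simp [poissonD, poisson]
  rw [this]
  positivity

end

section
variable {d : ℕ}

lemma cast_shift (z : Fin d → ℕ) (i : Fin d) :
    (fun j => (((z + Pi.single i 1) : Fin d → ℕ) j : ℤ)) =
      (fun j => (z j : ℤ)) + Pi.single i 1 := by
  funext j
  by_cases hj : j = i
  · subst hj; simp [Pi.single_eq_same]
  · simp [Pi.single_eq_of_ne hj]

lemma shift_support (f : (Fin d → ℤ) → ℝ) (x : Fin d → ℤ) (u : ℝ) (i : Fin d) :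
    ∀ y : Fin d → ℕ, y ∉ Set.range (fun z : Fin d → ℕ => z + Pi.single i 1) →
      f (x + fun j => (y j : ℤ)) * poissonZd d u ((fun j => (y j : ℤ)) - Pi.single i 1) = 0 := by
  intro y hy
  have hyi : y i = 0 := by
    by_contra h
    apply hy
    refine ⟨fun j => y j - (Pi.single i 1 : Fin d → ℕ) j, ?_⟩
    funext j
    by_cases hj : j = i
    · subst hj; simp [Pi.single_eq_same]; omega
    · simp [Pi.single_eq_of_ne hj]
  have : poissonZd d u ((fun j => (y j : ℤ)) - Pi.single i 1) = 0 := by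
    apply Finset.prod_eq_zero (Finset.mem_univ i)
    have h2 : ((fun j => (y j : ℤ)) - Pi.single i 1 : Fin d → ℤ) i = -1 := by
      simp [hyi, Pi.single_eq_same]
    rw [h2]
    exact poissonZ_neg u (by norm_num)
  rw [this, mul_zero]

lemma shift_comp (f : (Fin d → ℤ) → ℝ) (x : Fin d → ℤ) (u : ℝ) (i : Fin d) (z : Fin d → ℕ) :
    f (x + fun j => (((z + Pi.single i 1) : Fin d → ℕ) j : ℤ)) *
        poissonZd d u ((fun j => (((z + Pi.single i 1) : Fin d → ℕ) j : ℤ)) - Pi.single i 1)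
      = f ((x + Pi.single i 1) + fun j => (z j : ℤ)) * poissonD d u z := by
  rw [cast_shift, poissonD_eq]
  congr 2
  · ring
  · ring

lemma shift_inj (i : Fin d) :
    Function.Injective (fun z : Fin d → ℕ => z + Pi.single i 1) :=
  add_left_injective _

lemma summable_shift (f : (Fin d → ℤ) → ℝ) (C : ℝ) (hfb : ∀ x, |f x| ≤ C)
    (x : Fin d → ℤ) (u : ℝ) (i : Fin d) :
    Summable (fun y : Fin d → ℕ =>
      f (x + fun j => (y j : ℤ)) * poissonZd d u ((fun j => (y j : ℤ)) - Pi.single i 1)) := by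
  rw [← Function.Injective.summable_iff (shift_inj i) (shift_support f x u i)]
  have := summable_PZ f C hfb (x + Pi.single i 1) u
  apply this.congr
  intro z
  exact (shift_comp f x u i z).symm

lemma tsum_shift (f : (Fin d → ℤ) → ℝ) (x : Fin d → ℤ) (u : ℝ) (i : Fin d) :
    (∑' y : Fin d → ℕ,
      f (x + fun j => (y j : ℤ)) * poissonZd d u ((fun j => (y j : ℤ)) - Pi.single i 1))
      = PZ d u f (x + Pi.single i 1) := by
  have hsupp : Function.support (fun y : Fin d → ℕ =>
      f (x + fun j => (y j : ℤ)) * poissonZd d u ((fun j => (y j : ℤ)) - Pi.single i 1))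
      ⊆ Set.range (fun z : Fin d → ℕ => z + Pi.single i 1) := by
    intro y hy
    by_contra h
    exact hy (shift_support f x u i y h)
  calc (∑' y : Fin d → ℕ,
      f (x + fun j => (y j : ℤ)) * poissonZd d u ((fun j => (y j : ℤ)) - Pi.single i 1))
      = ∑' z : Fin d → ℕ,
        f (x + fun j => (((z + Pi.single i 1) : Fin d → ℕ) j : ℤ)) *
          poissonZd d u ((fun j => (((z + Pi.single i 1) : Fin d → ℕ) j : ℤ)) - Pi.single i 1) :=
        (Function.Injective.tsum_eq (shift_inj i) hsupp).symm
    _ = PZ d u f (x + Pi.single i 1) := by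
        rw [PZ]
        exact tsum_congr (fun z => shift_comp f x u i z)

end

section
variable {d : ℕ}

lemma hasDerivAt_PZ (f : (Fin d → ℤ) → ℝ) (C : ℝ) (hfb : ∀ x, |f x| ≤ C)
    (x : Fin d → ℤ) (τ : ℝ) :
    HasDerivAt (fun u => PZ d u f x)
      (∑ i, (PZ d τ f (x + Pi.single i 1) - PZ d τ f x)) τ := by
  classical
  have hC : 0 ≤ C := le_trans (abs_nonneg _) (hfb x)
  set R : ℝ := |τ| + 1 with hRdef
  have hR1 : 1 ≤ R := by simp [hRdef]
  have hR0 : (0:ℝ) ≤ R := by linarith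
  set g : (Fin d → ℕ) → ℝ → ℝ := fun y u => f (x + fun j => (y j : ℤ)) * poissonD d u y
    with hgdef
  set g' : (Fin d → ℕ) → ℝ → ℝ := fun y u => f (x + fun j => (y j : ℤ)) *
    ∑ i, (poissonZd d u ((fun j => (y j : ℤ)) - Pi.single i 1)
      - poissonZd d u (fun j => (y j : ℤ))) with hg'def
  set Bd : (Fin d → ℕ) → ℝ := fun y =>
    C * ((2 * d) * ∏ i, (Real.exp R * (2 * R) ^ (y i) / (y i).factorial)) with hBdef
  have hBsummable : Summable Bd := ((summable_expBound (d := d) hR0).mul_left _).mul_left _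
  have hg : ∀ y u, u ∈ Metric.ball (0:ℝ) R → HasDerivAt (g y) (g' y u) u := by
    intro y u _
    have h := (hasDerivAt_poissonZd d (fun j => (y j : ℤ)) (fun j => Int.ofNat_nonneg _)
      u).const_mul (f (x + fun j => (y j : ℤ)))
    rw [hgdef, hg'def]
    simp only
    have heq : (fun v => f (x + fun j => (y j : ℤ)) * poissonD d v y)
        = fun v => f (x + fun j => (y j : ℤ)) * poissonZd d v (fun j => (y j : ℤ)) := by
      funext v; rw [poissonD_eq]
    rw [heq]
    exact h
  have hg' : ∀ y u, u ∈ Metric.ball (0:ℝ) R → ‖g' y u‖ ≤ Bd y := by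
    intro y u hu
    have huR : |u| ≤ R := by
      have := Metric.mem_ball.mp hu
      rw [Real.dist_eq, sub_zero] at this
      linarith
    have hP : ∀ i : Fin d,
        |poissonZd d u ((fun j => (y j : ℤ)) - Pi.single i 1)
          - poissonZd d u (fun j => (y j : ℤ))|
        ≤ 2 * ∏ i, (Real.exp R * (2 * R) ^ (y i) / (y i).factorial) := by
      intro i
      have b1 := abs_poissonZd_le (d := d) hR1 huR y
        ((fun j => (y j : ℤ)) - Pi.single i 1)
        (fun j => by by_cases hj : j = i  <;> simp [hj, Pi.single_eq_of_ne] <;> omega)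
        (fun j => by by_cases hj : j = i <;> simp [hj, Pi.single_eq_of_ne])
      have b2 := abs_poissonZd_le (d := d) hR1 huR y (fun j => (y j : ℤ))
        (fun j => le_refl _) (fun j => by simp)
      calc |poissonZd d u ((fun j => (y j : ℤ)) - Pi.single i 1)
          - poissonZd d u (fun j => (y j : ℤ))|
          ≤ |poissonZd d u ((fun j => (y j : ℤ)) - Pi.single i 1)|
            + |poissonZd d u (fun j => (y j : ℤ))| := abs_sub _ _
        _ ≤ _ := by rw [two_mul]; exact add_le_add b1 b2
    rw [hg'def]
    simp only [Real.norm_eq_abs, abs_mul]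
    rw [hBdef]
    simp only
    apply mul_le_mul (hfb _) _ (abs_nonneg _) hC
    calc |∑ i, (poissonZd d u ((fun j => (y j : ℤ)) - Pi.single i 1)
          - poissonZd d u (fun j => (y j : ℤ)))|
        ≤ ∑ i : Fin d, |poissonZd d u ((fun j => (y j : ℤ)) - Pi.single i 1)
          - poissonZd d u (fun j => (y j : ℤ))| := Finset.abs_sum_le_sum_abs _ _
      _ ≤ ∑ _i : Fin d, 2 * ∏ i, (Real.exp R * (2 * R) ^ (y i) / (y i).factorial) :=
          Finset.sum_le_sum (fun i _ => hP i)
      _ = (2 * d) * ∏ i, (Real.exp R * (2 * R) ^ (y i) / (y i).factorial) := by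
          rw [Finset.sum_const]; simp; ring
  have hmem : τ ∈ Metric.ball (0:ℝ) R := by
    rw [Metric.mem_ball, Real.dist_eq, sub_zero, hRdef]
    linarith
  have hf0 : Summable fun y => g y τ := summable_PZ f C hfb x τ
  have hmain := hasDerivAt_tsum_of_isPreconnected hBsummable Metric.isOpen_ball
    (convex_ball (0:ℝ) R).isPreconnected hg hg' hmem hf0 hmem
  have hfun : (fun u => ∑' y, g y u) = fun u => PZ d u f x := rfl
  rw [hfun] at hmain
  -- now compute the sum of derivatives
  have hSA : ∀ i : Fin d, Summable (fun y : Fin d → ℕ =>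
      f (x + fun j => (y j : ℤ)) * poissonZd d τ ((fun j => (y j : ℤ)) - Pi.single i 1)) :=
    fun i => summable_shift f C hfb x τ i
  have hSB : Summable (fun y : Fin d → ℕ =>
      f (x + fun j => (y j : ℤ)) * poissonZd d τ (fun j => (y j : ℤ))) := by
    apply (summable_PZ f C hfb x τ).congr
    intro y
    rw [poissonD_eq]
  have htsum : (∑' y, g' y τ) = ∑ i, (PZ d τ f (x + Pi.single i 1) - PZ d τ f x) := by
    have hsplit : (fun y => g' y τ) = fun y => ∑ i,
        (f (x + fun j => (y j : ℤ)) * poissonZd d τ ((fun j => (y j : ℤ)) - Pi.single i 1)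
          - f (x + fun j => (y j : ℤ)) * poissonZd d τ (fun j => (y j : ℤ))) := by
      funext y
      rw [hg'def]
      simp only [Finset.mul_sum, mul_sub]
    rw [hsplit, Summable.tsum_finsetSum (fun i _ => (hSA i).sub hSB)]
    apply Finset.sum_congr rfl
    intro i _
    rw [Summable.tsum_sub (hSA i) hSB, tsum_shift f x τ i]
    congr 1
  rw [htsum] at hmain
  exact hmain

end

section
variable {d : ℕ}

lemma poissonZ_zero (k : ℤ) : poissonZ 0 k = if k = 0 then 1 else 0 := by
  rcases lt_trichotomy k 0 with h | h | h
  · rw [poissonZ_neg _ h, if_neg (by omega)]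
  · subst h; simp [poissonZ]
  · rw [if_neg (by omega), poissonZ]
    rw [if_pos h.le]
    have : k.toNat ≠ 0 := by omega
    simp [this, zero_pow this]

lemma poissonZd_zero (z : Fin d → ℤ) : poissonZd d 0 z = if z = 0 then 1 else 0 := by
  unfold poissonZd
  rw [show (∏ i, poissonZ 0 (z i)) = ∏ i, (if z i = 0 then (1:ℝ) else 0) from
    Finset.prod_congr rfl (fun i _ => poissonZ_zero (z i))]
  rw [Finset.prod_boole]
  by_cases h : z = 0
  · subst h; simp
  · rw [if_neg h, if_neg]
    intro hall
    apply h
    funext i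
    exact hall i (Finset.mem_univ i)


end

/-- g solves the Kolmogorov forward equation of the Poisson–Föllmer process
    with initial condition g(s,·) = δ_{x_s}. -/
theorem forward_equation (d : ℕ) (T s : ℝ) (hs : 0 ≤ s) (hsT : s ≤ T)
    (f : (Fin d → ℤ) → ℝ) (c C : ℝ) (hc : 0 < c) (hf : ∀ x, c ≤ f x ∧ f x ≤ C)
    (xs : Fin d → ℤ) (hxs : ∀ i, 0 ≤ xs i) :
    (∀ t : ℝ, s ≤ t → t ≤ T → ∀ x : Fin d → ℤ, (∀ i, 0 ≤ x i) →
      HasDerivAt (fun u => gFun d T s f xs u x)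
        (∑ i, (PZ d (T - t) f x / PZ d (T - t) f (x - Pi.single i 1)
            * gFun d T s f xs t (x - Pi.single i 1)
          - PZ d (T - t) f (x + Pi.single i 1) / PZ d (T - t) f x
            * gFun d T s f xs t x)) t)
    ∧ (∀ x : Fin d → ℤ, gFun d T s f xs s x = if x = xs then 1 else 0) := by
  classical
  have hfb : ∀ x, |f x| ≤ C := by
    intro x
    rcases hf x with ⟨h1, h2⟩
    rw [abs_of_pos (lt_of_lt_of_le hc h1)]; exact h2
  have hDpos : 0 < PZ d (T - s) f xs := PZ_pos hc hf (by linarith) xs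
  constructor
  · intro t hst htT x hx
    have hxpos : 0 < PZ d (T - t) f x := PZ_pos hc hf (by linarith) x
    by_cases hle : ∀ i, xs i ≤ x i
    · -- main case
      set z : Fin d → ℤ := x - xs with hz
      have hz0 : ∀ i, 0 ≤ z i := by
        intro i; simp only [hz, Pi.sub_apply]; linarith [hle i]
      have hA : HasDerivAt (fun u => PZ d (T - u) f x)
          (∑ i, (PZ d (T - t) f x - PZ d (T - t) f (x + Pi.single i 1))) t := by
        have h1 := hasDerivAt_PZ f C hfb x (T - t)
        have h2 : HasDerivAt (fun u : ℝ => T - u) (-1) t := by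
          simpa using (hasDerivAt_id t).const_sub T
        have h3 := h1.comp t h2
        have heq : (∑ i, (PZ d (T - t) f (x + Pi.single i 1) - PZ d (T - t) f x)) * (-1)
            = ∑ i, (PZ d (T - t) f x - PZ d (T - t) f (x + Pi.single i 1)) := by
          rw [mul_neg_one, ← Finset.sum_neg_distrib]
          exact Finset.sum_congr rfl (fun i _ => neg_sub _ _)
        rw [heq] at h3
        exact h3
      have hB : HasDerivAt (fun u => poissonZd d (u - s) z)
          (∑ i, (poissonZd d (t - s) (z - Pi.single i 1) - poissonZd d (t - s) z)) t := by
        have h1 := hasDerivAt_poissonZd d z hz0 (t - s)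
        have h2 : HasDerivAt (fun u : ℝ => u - s) 1 t := (hasDerivAt_id t).sub_const s
        have h3 := h1.comp t h2
        simp at h3 ⊢; exact h3
      have hAB := (hA.mul hB).div_const (PZ d (T - s) f xs)
      have hgf : (fun u => gFun d T s f xs u x)
          = fun u => (PZ d (T - u) f x * poissonZd d (u - s) z) / PZ d (T - s) f xs := by
        funext u
        unfold gFun
        rw [if_pos hle, one_mul, div_mul_eq_mul_div]
      rw [hgf]
      replace hAB : HasDerivAt (fun u => (PZ d (T - u) f x * poissonZd d (u - s) z) / PZ d (T - s) f xs) _ t := hAB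
      convert hAB using 1
      rw [Finset.sum_mul, Finset.mul_sum, ← Finset.sum_add_distrib, Finset.sum_div]
      apply Finset.sum_congr rfl
      intro i _
      have key1 : PZ d (T - t) f x / PZ d (T - t) f (x - Pi.single i 1)
          * gFun d T s f xs t (x - Pi.single i 1)
          = PZ d (T - t) f x * poissonZd d (t - s) (z - Pi.single i 1)
            / PZ d (T - s) f xs := by
        have hsub : (x - Pi.single i 1) - xs = z - Pi.single i 1 := by
          rw [hz, sub_right_comm]
        by_cases hlt : xs i < x i
        · have hcond : ∀ j, xs j ≤ (x - Pi.single i 1 : Fin d → ℤ) j := by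
            intro j
            by_cases hj : j = i
            · subst hj
              simp only [Pi.sub_apply, Pi.single_eq_same]
              omega
            · have : (Pi.single i 1 : Fin d → ℤ) j = 0 := Pi.single_eq_of_ne hj 1
              simp only [Pi.sub_apply, this, sub_zero]
              exact hle j
          have hpos' : 0 < PZ d (T - t) f (x - Pi.single i 1) :=
            PZ_pos hc hf (by linarith) _
          unfold gFun
          rw [if_pos hcond, one_mul, hsub]
          field_simp
        · have hxi : xs i = x i := le_antisymm (hle i) (by omega)
          have hcond : ¬ (∀ j, xs j ≤ (x - Pi.single i 1 : Fin d → ℤ) j) := by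
            intro hcon
            have h5 := hcon i
            simp only [Pi.sub_apply, Pi.single_eq_same] at h5
            omega
          have hzero : poissonZd d (t - s) (z - Pi.single i 1) = 0 := by
            apply Finset.prod_eq_zero (Finset.mem_univ i)
            have h6 : (z - Pi.single i 1 : Fin d → ℤ) i = -1 := by
              have h7 : z i = 0 := by
                rw [hz]
                simp only [Pi.sub_apply]
                omega
              simp only [Pi.sub_apply, Pi.single_eq_same, h7]
              norm_num
            rw [h6]
            exact poissonZ_neg _ (by norm_num)
          unfold gFun
          rw [if_neg hcond, hzero]
          ring
      have key2 : PZ d (T - t) f (x + Pi.single i 1) / PZ d (T - t) f x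
          * gFun d T s f xs t x
          = PZ d (T - t) f (x + Pi.single i 1) * poissonZd d (t - s) z
            / PZ d (T - s) f xs := by
        unfold gFun
        rw [if_pos hle, one_mul, ← hz]
        field_simp
      rw [key1, key2]
      ring
    · -- indicator is zero for all times
      have hfun : (fun u => gFun d T s f xs u x) = fun _ => (0:ℝ) := by
        funext u
        unfold gFun
        rw [if_neg hle]
        ring
      rw [hfun]
      have hsum : (∑ i, (PZ d (T - t) f x / PZ d (T - t) f (x - Pi.single i 1)
            * gFun d T s f xs t (x - Pi.single i 1)
          - PZ d (T - t) f (x + Pi.single i 1) / PZ d (T - t) f x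
            * gFun d T s f xs t x)) = 0 := by
        apply Finset.sum_eq_zero
        intro i _
        have h1 : ¬ (∀ j, xs j ≤ (x - Pi.single i 1 : Fin d → ℤ) j) := by
          intro hcon
          apply hle
          intro j
          have hj2 := hcon j
          have hsingle : (0:ℤ) ≤ (Pi.single i 1 : Fin d → ℤ) j := by
            by_cases hj : j = i
            · subst hj; simp
            · simp [Pi.single_eq_of_ne hj]
          simp only [Pi.sub_apply] at hj2
          omega
        have g1 : gFun d T s f xs t (x - Pi.single i 1) = 0 := by
          unfold gFun; rw [if_neg h1]; ring
        have g2 : gFun d T s f xs t x = 0 := by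
          unfold gFun; rw [if_neg hle]; ring
        rw [g1, g2]
        ring
      rw [hsum]
      exact hasDerivAt_const t 0
  · intro x
    unfold gFun
    rw [sub_self, poissonZd_zero]
    by_cases hxx : x = xs
    · subst hxx
      rw [if_pos (fun i => le_refl (x i)), if_pos rfl]
      simp [div_self (ne_of_gt hDpos)]
    · rw [if_neg hxx,
        if_neg (show ¬(x - xs = 0) from fun h => hxx (sub_eq_zero.mp h)), mul_zero]
end

section
/- Discrete Tweedie's formula: for the Poisson-Föllmer process with target μ = f·π_T, the intensity satisfies λⁱ(t,x) = (E[X_Tⁱ | X_t = x] − xⁱ)/(T−t) for each i and t ∈ [0,T), i.e., (T−t)·h(t,x+eᵢ)/h(t,x) = ∑_{y∈ℕ^d} f(x+y) yⁱ π_{T−t}(y) / P_{T−t}f(x). -/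
noncomputable def poissonSemigroup (d : ℕ) (t : ℝ) (G : (Fin d → ℕ) → ℝ)
    (x : Fin d → ℕ) : ℝ :=
  ∑' y : Fin d → ℕ, G (x + y) * poissonD d t y

lemma poisson_pos {s : ℝ} (hs : 0 < s) (k : ℕ) : 0 < poisson s k := by
  unfold poisson
  positivity

lemma poisson_step (s : ℝ) (k : ℕ) :
    ((k : ℝ) + 1) * poisson s (k + 1) = s * poisson s k := by
  unfold poisson
  rw [Nat.factorial_succ, pow_succ]
  have h1 : (k.factorial : ℝ) ≠ 0 := Nat.cast_ne_zero.mpr k.factorial_ne_zero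
  have h2 : ((k : ℝ) + 1) ≠ 0 := by positivity
  push_cast
  field_simp

/-- Discrete Tweedie's formula:
    (T-t)·h(t,x+eᵢ)/h(t,x) = ∑_y f(x+y) yⁱ π_{T-t}(y) / P_{T-t}f(x),
    i.e. λⁱ(t,x) = (E[X_Tⁱ | X_t = x] - xⁱ)/(T-t). -/
theorem discrete_tweedie (d : ℕ) (T : ℝ) (hT : 0 < T)
    (f : (Fin d → ℕ) → ℝ) (c C : ℝ) (hc : 0 < c) (hf : ∀ x, c ≤ f x ∧ f x ≤ C)
    (t : ℝ) (ht0 : 0 ≤ t) (htT : t < T) (x : Fin d → ℕ) (i : Fin d) :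
    (T - t) * (poissonSemigroup d (T - t) f (x + Pi.single i 1)
        / poissonSemigroup d (T - t) f x)
      = (∑' y : Fin d → ℕ, f (x + y) * (y i : ℝ) * poissonD d (T - t) y)
          / poissonSemigroup d (T - t) f x := by
  set s := T - t with hsdef
  have hs : 0 < s := by simp [hsdef]; linarith
  have hfpos : ∀ w, 0 < f w := fun w => lt_of_lt_of_le hc (hf w).1
  have hDpos : ∀ w : Fin d → ℕ, 0 < poissonD d s w := by
    intro w
    unfold poissonD
    exact Finset.prod_pos fun j _ => poisson_pos hs (w j)
  have key : s * poissonSemigroup d s f (x + Pi.single i 1)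
      = ∑' y : Fin d → ℕ, f (x + y) * (y i : ℝ) * poissonD d s y := by
    rw [poissonSemigroup, ← tsum_mul_left]
    symm
    apply tsum_eq_tsum_of_ne_zero_bij
      (g := fun z : Fin d → ℕ => s * (f (x + Pi.single i 1 + z) * poissonD d s z))
      (i := fun z => (z : Fin d → ℕ) + Pi.single i 1)
    · intro a b hab
      exact Subtype.ext (by
        have := add_right_cancel hab
        exact this)
    · -- support ⊆ range
      intro y hy
      have hyi : y i ≠ 0 := by
        intro h
        apply hy
        simp [h]
      refine ⟨⟨Function.update y i (y i - 1), ?_⟩, ?_⟩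
      · -- membership in support of g
        have : 0 < s * (f (x + Pi.single i 1 + Function.update y i (y i - 1))
            * poissonD d s (Function.update y i (y i - 1))) := by
          have := hfpos (x + Pi.single i 1 + Function.update y i (y i - 1))
          have := hDpos (Function.update y i (y i - 1))
          positivity
        exact ne_of_gt this
      · funext j
        by_cases hj : j = i
        · subst hj
          simp [Function.update_self, Nat.sub_add_cancel (Nat.one_le_iff_ne_zero.mpr hyi)]
        · simp [Function.update_of_ne hj, Pi.single_eq_of_ne hj]
    · -- value equality
      intro zz
      obtain ⟨z, hz⟩ := zz
      set w : Fin d → ℕ := z + Pi.single i 1 with hw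
      have hzi : w i = z i + 1 := by simp [hw]
      have hπ : ((z i : ℝ) + 1) * poissonD d s w
          = s * poissonD d s z := by
        unfold poissonD
        rw [← Finset.mul_prod_erase Finset.univ _ (Finset.mem_univ i),
            ← Finset.mul_prod_erase Finset.univ (fun j => poisson s (z j)) (Finset.mem_univ i)]
        have hrest : ∏ j ∈ Finset.univ.erase i, poisson s (w j)
            = ∏ j ∈ Finset.univ.erase i, poisson s (z j) := by
          apply Finset.prod_congr rfl
          intro j hj
          have hj' : j ≠ i := (Finset.mem_erase.mp hj).1
          simp [hw, Pi.single_eq_of_ne hj']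
        rw [hrest, hzi, ← mul_assoc, ← mul_assoc]
        congr 1
        push_cast
        exact poisson_step s (z i)
      show f (x + w) * (w i : ℝ) * poissonD d s w
          = s * (f (x + Pi.single i 1 + z) * poissonD d s z)
      rw [show x + w = x + Pi.single i 1 + z from by rw [hw]; abel, hzi]
      push_cast
      calc f (x + Pi.single i 1 + z) * ((z i : ℝ) + 1) * poissonD d s w
          = f (x + Pi.single i 1 + z) * (((z i : ℝ) + 1) * poissonD d s w) := by
            ring
        _ = f (x + Pi.single i 1 + z) * (s * poissonD d s z) := by rw [hπ]
        _ = s * (f (x + Pi.single i 1 + z) * poissonD d s z) := by ring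
  rw [← mul_div_assoc, key]
end

section
/- The time derivative of the product Binomial pmf satisfies ∂_t B_{x,t}(y) = ∑_{i=1}^d xⁱ [ B_{x−eᵢ,t}(y−eᵢ) − B_{x−eᵢ,t}(y) ] for t ∈ (0,1) and 0 ≤ y ≤ x in ℕ^d. -/
/-- Product Binomial pmf on ℤ^d, zero unless 0 ≤ y ≤ x. -/
noncomputable def Bpmf (d : ℕ) (x : Fin d → ℤ) (t : ℝ) (y : Fin d → ℤ) : ℝ :=
  if ∀ i, 0 ≤ y i ∧ y i ≤ x i then
    ∏ i, ((x i).toNat.choose ((y i).toNat) : ℝ) * t ^ (y i).toNat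
      * (1 - t) ^ ((x i).toNat - (y i).toNat)
  else 0

lemma key_choice1 (n k : ℕ) (hk1 : 1 ≤ k) (hkn : k ≤ n) :
    n * (n-1).choose (k-1) = n.choose k * k := by
  obtain ⟨n', rfl⟩ := Nat.exists_eq_add_of_le' (hk1.trans hkn)
  obtain ⟨k', rfl⟩ := Nat.exists_eq_add_of_le' hk1
  simpa using Nat.add_one_mul_choose_eq n' k'

lemma key_choice2 (n k : ℕ) (hn1 : 1 ≤ n) :
    (n-1).choose k * n = n.choose k * (n - k) := by
  obtain ⟨n', rfl⟩ := Nat.exists_eq_add_of_le' hn1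
  simpa using Nat.choose_mul_succ_eq n' k

lemma key (n k : ℕ) (hk : k ≤ n) (t : ℝ) :
    (n.choose k : ℝ) * ((k:ℝ) * t^(k-1)) * (1-t)^(n-k)
      + ((n.choose k : ℝ) * t^k) * (((n-k : ℕ):ℝ) * (1-t)^(n-k-1) * (-1))
    = (n:ℝ) * ((if 1 ≤ k then (((n-1).choose (k-1) : ℕ):ℝ) * t^(k-1) * (1-t)^((n-1)-(k-1)) else 0)
      - (if k < n then (((n-1).choose k : ℕ):ℝ) * t^k * (1-t)^((n-1)-k) else 0)) := by
  have h1 : (n.choose k : ℝ) * ((k:ℝ) * t^(k-1)) * (1-t)^(n-k)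
      = (n:ℝ) * (if 1 ≤ k then (((n-1).choose (k-1) : ℕ):ℝ) * t^(k-1) * (1-t)^((n-1)-(k-1)) else 0) := by
    by_cases hk1 : 1 ≤ k
    · rw [if_pos hk1]
      have he : (n-1)-(k-1) = n - k := by omega
      have hc : (n:ℝ) * ((n-1).choose (k-1) : ℝ) = (n.choose k : ℝ) * k := by
        exact_mod_cast congrArg (Nat.cast (R := ℝ)) (key_choice1 n k hk1 hk)
      rw [he]
      linear_combination (-(t^(k-1)) * (1-t)^(n-k)) * hc
    · rw [if_neg hk1]
      have : k = 0 := by omega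
      subst this
      simp
  have h2 : ((n.choose k : ℝ) * t^k) * (((n-k : ℕ):ℝ) * (1-t)^(n-k-1) * (-1))
      = -((n:ℝ) * (if k < n then (((n-1).choose k : ℕ):ℝ) * t^k * (1-t)^((n-1)-k) else 0)) := by
    by_cases hkn : k < n
    · rw [if_pos hkn]
      have he : n-k-1 = (n-1)-k := by omega
      have hc : ((n-1).choose k : ℝ) * n = (n.choose k : ℝ) * ((n-k : ℕ) : ℝ) := by
        exact_mod_cast congrArg (Nat.cast (R := ℝ)) (key_choice2 n k (by omega))
      rw [he]
      linear_combination (t^k * (1-t)^((n-1)-k)) * hc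
    · rw [if_neg hkn]
      have : n - k = 0 := by omega
      rw [this]
      simp
  rw [h1, h2]; ring

/-- Time derivative of the Binomial pmf:
    ∂_t B_{x,t}(y) = ∑ᵢ xⁱ [B_{x-eᵢ,t}(y-eᵢ) - B_{x-eᵢ,t}(y)]. -/
theorem binomial_time_derivative (d : ℕ) (x y : Fin d → ℤ)
    (hy : ∀ i, 0 ≤ y i) (hyx : ∀ i, y i ≤ x i)
    (t : ℝ) (ht0 : 0 < t) (ht1 : t < 1) :
    HasDerivAt (fun u => Bpmf d x u y)
      (∑ i, (x i : ℝ) * (Bpmf d (x - Pi.single i 1) t (y - Pi.single i 1)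
        - Bpmf d (x - Pi.single i 1) t y)) t := by
  classical
  set n : Fin d → ℕ := fun i => (x i).toNat with hn
  set k : Fin d → ℕ := fun i => (y i).toNat with hk
  have hxn : ∀ i, x i = (n i : ℤ) := fun i => (Int.toNat_of_nonneg ((hy i).trans (hyx i))).symm
  have hyk : ∀ i, y i = (k i : ℤ) := fun i => (Int.toNat_of_nonneg (hy i)).symm
  have hkn : ∀ i, k i ≤ n i := by
    intro i
    have := hyx i; have := hy i
    simp only [hn, hk]
    omega
  set f : Fin d → ℝ → ℝ :=
    fun i u => ((n i).choose (k i) : ℝ) * u ^ (k i) * (1 - u) ^ (n i - k i) with hf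
  set f' : Fin d → ℝ :=
    fun i => ((n i).choose (k i) : ℝ) * ((k i : ℝ) * t ^ (k i - 1)) * (1-t) ^ (n i - k i)
      + (((n i).choose (k i) : ℝ) * t ^ (k i)) * (((n i - k i : ℕ):ℝ) * (1-t)^(n i - k i - 1) * (-1))
    with hf'
  have hfun : (fun u => Bpmf d x u y) = fun u => ∏ i, f i u := by
    funext u
    rw [Bpmf, if_pos (fun i => ⟨hy i, hyx i⟩)]
  have hderiv : ∀ i ∈ Finset.univ, HasDerivAt (f i) (f' i) t := by
    intro i _
    have hA : HasDerivAt (fun u : ℝ => ((n i).choose (k i) : ℝ) * u ^ (k i))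
        (((n i).choose (k i) : ℝ) * ((k i : ℝ) * t ^ (k i - 1))) t :=
      (hasDerivAt_pow (k i) t).const_mul _
    have hb0 : HasDerivAt (fun u : ℝ => 1 - u) (-1) t := (hasDerivAt_id t).const_sub 1
    have hB : HasDerivAt (fun u : ℝ => (1 - u) ^ (n i - k i))
        ((((n i - k i : ℕ)):ℝ) * (1-t)^(n i - k i - 1) * (-1)) t :=
      (hasDerivAt_pow (n i - k i) (1 - t)).comp t hb0
    exact hA.mul hB
  have hprodne : ∀ i : Fin d, ∀ (x' y' : Fin d → ℤ), (∀ j ≠ i, x' j = x j) → (∀ j ≠ i, y' j = y j) →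
      ∏ j ∈ Finset.univ.erase i, (((x' j).toNat.choose ((y' j).toNat) : ℝ) * t ^ (y' j).toNat
        * (1 - t) ^ ((x' j).toNat - (y' j).toNat)) = ∏ j ∈ Finset.univ.erase i, f j t := by
    intro i x' y' hx' hy'
    refine Finset.prod_congr rfl fun j hj => ?_
    have hji : j ≠ i := (Finset.mem_erase.mp hj).1
    rw [hx' j hji, hy' j hji]
  have hB1 : ∀ i, Bpmf d (x - Pi.single i 1) t (y - Pi.single i 1)
      = (if 1 ≤ k i then (((n i - 1).choose (k i - 1) : ℕ):ℝ) * t^(k i - 1)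
          * (1-t)^((n i - 1)-(k i - 1)) else 0) * ∏ j ∈ Finset.univ.erase i, f j t := by
    intro i
    have hxi : (x - Pi.single i 1 : Fin d → ℤ) i = (n i : ℤ) - 1 := by
      simp [← hxn i]
    have hyi : (y - Pi.single i 1 : Fin d → ℤ) i = (k i : ℤ) - 1 := by
      simp [← hyk i]
    have hxj : ∀ j ≠ i, (x - Pi.single i 1 : Fin d → ℤ) j = x j := by
      intro j hj; simp [Pi.single_eq_of_ne hj]
    have hyj : ∀ j ≠ i, (y - Pi.single i 1 : Fin d → ℤ) j = y j := by
      intro j hj; simp [Pi.single_eq_of_ne hj]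
    by_cases h : 1 ≤ k i
    · rw [if_pos h, Bpmf, if_pos]
      · rw [← Finset.mul_prod_erase Finset.univ _ (Finset.mem_univ i),
          hprodne i _ _ hxj hyj]
        have ha : ((n i : ℤ) - 1).toNat = n i - 1 := by omega
        have hb : ((k i : ℤ) - 1).toNat = k i - 1 := by omega
        rw [hxi, hyi, ha, hb]
      · intro j
        by_cases hj : j = i
        · subst hj
          rw [hxi, hyi]
          have := hkn j
          constructor <;> omega
        · rw [hxj j hj, hyj j hj]
          exact ⟨hy j, hyx j⟩
    · rw [if_neg h, Bpmf, if_neg, zero_mul]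
      intro hcond
      have := (hcond i).1
      rw [hyi] at this
      omega
  have hB2 : ∀ i, Bpmf d (x - Pi.single i 1) t y
      = (if k i < n i then (((n i - 1).choose (k i) : ℕ):ℝ) * t^(k i)
          * (1-t)^((n i - 1)-(k i)) else 0) * ∏ j ∈ Finset.univ.erase i, f j t := by
    intro i
    have hxi : (x - Pi.single i 1 : Fin d → ℤ) i = (n i : ℤ) - 1 := by
      simp [← hxn i]
    have hxj : ∀ j ≠ i, (x - Pi.single i 1 : Fin d → ℤ) j = x j := by
      intro j hj; simp [Pi.single_eq_of_ne hj]
    by_cases h : k i < n i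
    · rw [if_pos h, Bpmf, if_pos]
      · rw [← Finset.mul_prod_erase Finset.univ _ (Finset.mem_univ i),
          hprodne i _ _ hxj (fun _ _ => rfl)]
        have ha : ((n i : ℤ) - 1).toNat = n i - 1 := by omega
        have hb : (y i).toNat = k i := rfl
        rw [hxi, ha, hb]
      · intro j
        by_cases hj : j = i
        · subst hj
          rw [hxi, hyk j]
          constructor
          · positivity
          · omega
        · rw [hxj j hj]
          exact ⟨hy j, hyx j⟩
    · rw [if_neg h, Bpmf, if_neg, zero_mul]
      intro hcond
      have := (hcond i).2
      rw [hxi, hyk i] at this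
      omega
  have hval : (∑ i, (x i : ℝ) * (Bpmf d (x - Pi.single i 1) t (y - Pi.single i 1)
        - Bpmf d (x - Pi.single i 1) t y))
      = ∑ i, (∏ j ∈ Finset.univ.erase i, f j t) • f' i := by
    refine Finset.sum_congr rfl fun i _ => ?_
    rw [hB1 i, hB2 i, smul_eq_mul]
    have hx : (x i : ℝ) = ((n i : ℕ) : ℝ) := by exact_mod_cast congrArg (Int.cast (R := ℝ)) (hxn i)
    have hfi : f' i = ((n i : ℕ):ℝ) * ((if 1 ≤ k i then (((n i - 1).choose (k i - 1) : ℕ):ℝ)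
          * t^(k i - 1) * (1-t)^((n i - 1)-(k i - 1)) else 0)
        - (if k i < n i then (((n i - 1).choose (k i) : ℕ):ℝ) * t^(k i)
          * (1-t)^((n i - 1)-(k i)) else 0)) := key (n i) (k i) (hkn i) t
    rw [hx, hfi]
    ring
  rw [hfun, hval]
  exact HasDerivAt.fun_finsetProd hderiv
end

section
/- Optimal affine baseline for Binomial thinning: with X₁ as above (mean μ_d, variance σ_d², μ_d > 0) and X_t | X₁ ∼ Binomial(X₁, t), the minimizer over (b_skip, b_out) of E[(X₁ − b_skip X_t − b_out μ_d)²] is b_skip(t) = σ_d² / (μ_d(1−t) + σ_d² t) and b_out(t) = 1 − t·b_skip(t). -/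
open MeasureTheory

noncomputable def binomPMF (n : ℕ) (t : ℝ) (k : ℕ) : ℝ :=
  (n.choose k : ℝ) * t ^ k * (1 - t) ^ (n - k)

lemma binomPMF_eval (n k : ℕ) (t : ℝ) :
    binomPMF n t k = (bernsteinPolynomial ℝ n k).eval t := by
  simp [binomPMF, bernsteinPolynomial, mul_comm]

lemma binomPMF_eq_zero {n k : ℕ} (h : n < k) (t : ℝ) : binomPMF n t k = 0 := by
  simp [binomPMF, Nat.choose_eq_zero_of_lt h]

lemma binomPMF_sum (n : ℕ) (t : ℝ) :
    ∑ k ∈ Finset.range (n + 1), binomPMF n t k = 1 := by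
  have h := congrArg (Polynomial.eval t) (bernsteinPolynomial.sum ℝ n)
  simpa [binomPMF_eval, Polynomial.eval_finset_sum] using h

lemma binomPMF_sum_mul (n : ℕ) (t : ℝ) :
    ∑ k ∈ Finset.range (n + 1), (k : ℝ) * binomPMF n t k = n * t := by
  have h := congrArg (Polynomial.eval t) (bernsteinPolynomial.sum_smul ℝ n)
  simpa [binomPMF_eval, Polynomial.eval_finset_sum, nsmul_eq_mul, mul_comm] using h

lemma cast_mul_pred (k : ℕ) : ((k * (k - 1) : ℕ) : ℝ) = (k : ℝ) ^ 2 - k := by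
  cases k with
  | zero => simp
  | succ m => push_cast [Nat.succ_sub_one]; ring

lemma binomPMF_sum_sq (n : ℕ) (t : ℝ) :
    ∑ k ∈ Finset.range (n + 1), (k : ℝ) ^ 2 * binomPMF n t k
      = (n : ℝ) * ((n : ℝ) - 1) * t ^ 2 + n * t := by
  have h := congrArg (Polynomial.eval t) (bernsteinPolynomial.sum_mul_smul ℝ n)
  simp only [Polynomial.eval_finset_sum, nsmul_eq_mul, Polynomial.eval_mul,
    Polynomial.eval_natCast, Polynomial.eval_pow, Polynomial.eval_X] at h
  have h' : ∑ k ∈ Finset.range (n + 1), ((k * (k - 1) : ℕ) : ℝ) * binomPMF n t k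
      = ((n * (n - 1) : ℕ) : ℝ) * t ^ 2 := by
    simpa [binomPMF_eval] using h
  have h2 := binomPMF_sum_mul n t
  have e1 : ∀ k : ℕ, (k : ℝ) ^ 2 * binomPMF n t k
      = ((k * (k - 1) : ℕ) : ℝ) * binomPMF n t k + (k : ℝ) * binomPMF n t k := by
    intro k; rw [cast_mul_pred]; ring
  rw [Finset.sum_congr rfl fun k _ => e1 k, Finset.sum_add_distrib, h', h2, cast_mul_pred]
  ring

lemma summable_meas_smul {α : Type*} [Countable α] [MeasurableSpace α]
    [MeasurableSingletonClass α] {ν : Measure α} {f : α → ℝ}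
    (hf : Integrable f ν) : Summable (fun a => (ν {a}).toReal * f a) := by
  have h1 : ∫⁻ a, ‖f a‖₊ ∂ν = ∑' a, (‖f a‖₊ : ENNReal) * ν {a} :=
    lintegral_countable' _
  have h2 : ∑' a, (‖f a‖₊ : ENNReal) * ν {a} ≠ ⊤ := h1 ▸ hf.2.ne
  have h3 := ENNReal.summable_toReal h2
  simp only [ENNReal.toReal_mul, ENNReal.coe_toReal, coe_nnnorm] at h3
  refine Summable.of_norm_bounded h3 fun a => ?_
  rw [norm_mul, Real.norm_of_nonneg ENNReal.toReal_nonneg, mul_comm]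

/-- Optimal affine baseline for Binomial thinning: the minimizer of
    E[(X₁ - b_skip X_t - b_out μ_d)²] is
    b_skip = σ_d²/(μ_d(1-t) + σ_d² t), b_out = 1 - t·b_skip. -/
theorem optimal_affine_baseline
    {Ω : Type*} [MeasurableSpace Ω] (ℙ : Measure Ω) [IsProbabilityMeasure ℙ]
    (X1 Xt : Ω → ℕ) (hX1 : Measurable X1) (hXt : Measurable Xt)
    (hint : Integrable (fun ω => ((X1 ω : ℝ)) ^ 2) ℙ)
    (t : ℝ) (ht0 : 0 ≤ t) (ht1 : t < 1)
    (hcond : ∀ n k : ℕ,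
      (ℙ {ω | Xt ω = k ∧ X1 ω = n}).toReal
        = binomPMF n t k * (ℙ {ω | X1 ω = n}).toReal)
    (μd σd2 : ℝ) (hμpos : 0 < μd)
    (hμ : ∫ ω, (X1 ω : ℝ) ∂ℙ = μd)
    (hσ : ∫ ω, ((X1 ω : ℝ) - μd) ^ 2 ∂ℙ = σd2) :
    ∀ a b : ℝ,
      ∫ ω, ((X1 ω : ℝ)
          - (σd2 / (μd * (1 - t) + σd2 * t)) * (Xt ω : ℝ)
          - (1 - t * (σd2 / (μd * (1 - t) + σd2 * t))) * μd) ^ 2 ∂ℙ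
        ≤ ∫ ω, ((X1 ω : ℝ) - a * (Xt ω : ℝ) - b * μd) ^ 2 ∂ℙ := by
  intro a b
  -- measurability of real casts
  have mX1 : Measurable fun ω => (X1 ω : ℝ) := measurable_from_top.comp hX1
  have mXt : Measurable fun ω => (Xt ω : ℝ) := measurable_from_top.comp hXt
  -- almost everywhere Xt ≤ X1
  have hnull : ∀ n k : ℕ, n < k → ℙ {ω | Xt ω = k ∧ X1 ω = n} = 0 := by
    intro n k h
    have h0 := hcond n k
    rw [binomPMF_eq_zero h, zero_mul] at h0
    exact ((ENNReal.toReal_eq_zero_iff _).mp h0).resolve_right (measure_ne_top ℙ _)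
  have hle : ∀ᵐ ω ∂ℙ, Xt ω ≤ X1 ω := by
    rw [MeasureTheory.ae_iff]
    have hU : ℙ (⋃ p : ℕ × ℕ, {ω | Xt ω = p.2 ∧ X1 ω = p.1 ∧ p.1 < p.2}) = 0 := by
      refine measure_iUnion_null fun p => ?_
      by_cases hp : p.1 < p.2
      · refine measure_mono_null ?_ (hnull p.1 p.2 hp)
        exact fun ω h => ⟨h.1, h.2.1⟩
      · have he : {ω | Xt ω = p.2 ∧ X1 ω = p.1 ∧ p.1 < p.2} = ∅ := by
          ext ω; simp only [Set.mem_setOf_eq, Set.mem_empty_iff_false, iff_false]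
          tauto
        simp [he]
    refine measure_mono_null (fun ω hω => ?_) hU
    simp only [Set.mem_setOf_eq, not_le] at hω
    exact Set.mem_iUnion.2 ⟨(X1 ω, Xt ω), rfl, rfl, hω⟩
  -- integrability facts
  have intX1 : Integrable (fun ω => (X1 ω : ℝ)) ℙ := by
    refine hint.mono mX1.aestronglyMeasurable (Filter.Eventually.of_forall fun ω => ?_)
    rw [Real.norm_of_nonneg (by positivity), Real.norm_of_nonneg (by positivity)]
    exact_mod_cast Nat.le_self_pow two_ne_zero (X1 ω)
  have intXt2 : Integrable (fun ω => (Xt ω : ℝ) ^ 2) ℙ := by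
    refine hint.mono ((mXt.pow_const 2).aestronglyMeasurable) ?_
    filter_upwards [hle] with ω h
    rw [Real.norm_of_nonneg (by positivity), Real.norm_of_nonneg (by positivity)]
    have : (Xt ω : ℝ) ≤ (X1 ω : ℝ) := by exact_mod_cast h
    exact pow_le_pow_left₀ (by positivity) this 2
  have intXt : Integrable (fun ω => (Xt ω : ℝ)) ℙ := by
    refine hint.mono mXt.aestronglyMeasurable ?_
    filter_upwards [hle] with ω h
    rw [Real.norm_of_nonneg (by positivity), Real.norm_of_nonneg (by positivity)]
    calc (Xt ω : ℝ) ≤ (X1 ω : ℝ) := by exact_mod_cast h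
      _ ≤ (X1 ω : ℝ) ^ 2 := by exact_mod_cast Nat.le_self_pow two_ne_zero (X1 ω)
  have intX1Xt : Integrable (fun ω => (X1 ω : ℝ) * (Xt ω : ℝ)) ℙ := by
    refine hint.mono (mX1.mul mXt).aestronglyMeasurable ?_
    filter_upwards [hle] with ω h
    rw [Real.norm_of_nonneg (by positivity), Real.norm_of_nonneg (by positivity)]
    have : (Xt ω : ℝ) ≤ (X1 ω : ℝ) := by exact_mod_cast h
    calc (X1 ω : ℝ) * (Xt ω : ℝ) ≤ (X1 ω : ℝ) * (X1 ω : ℝ) :=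
        mul_le_mul_of_nonneg_left this (by positivity)
      _ = (X1 ω : ℝ) ^ 2 := by ring
  -- second moment of X1
  have hI2 : ∫ ω, ((X1 ω : ℝ)) ^ 2 ∂ℙ = σd2 + μd ^ 2 := by
    have hfun : (fun ω => ((X1 ω : ℝ) - μd) ^ 2)
        = fun ω => (X1 ω : ℝ) ^ 2 - (2 * μd) * (X1 ω : ℝ) + μd ^ 2 := by
      funext ω; ring
    rw [hfun] at hσ
    have i1 : Integrable (fun ω => (X1 ω : ℝ) ^ 2 - 2 * μd * (X1 ω : ℝ)) ℙ := by
      exact hint.sub (intX1.const_mul _)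
    rw [integral_add i1 (integrable_const _),
      integral_sub hint (intX1.const_mul _), integral_const_mul, hμ,
      integral_const] at hσ
    simp only [Measure.real, measure_univ, ENNReal.toReal_one, smul_eq_mul, one_mul] at hσ
    linarith
  have hs_nonneg : 0 ≤ σd2 := hσ ▸ integral_nonneg fun ω => sq_nonneg _
  -- pushforward along (X1, Xt)
  set Y : Ω → ℕ × ℕ := fun ω => (X1 ω, Xt ω) with hYdef
  have hYm : Measurable Y := hX1.prodMk hXt
  set ν : Measure (ℕ × ℕ) := Measure.map Y ℙ with hνdef
  set pn : ℕ → ℝ := fun n => (ℙ {ω | X1 ω = n}).toReal with hpndef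
  have hν : ∀ p : ℕ × ℕ, (ν {p}).toReal = binomPMF p.1 t p.2 * pn p.1 := by
    intro p
    rw [hνdef, Measure.map_apply hYm (measurableSet_singleton p)]
    have hset : Y ⁻¹' {p} = {ω | Xt ω = p.2 ∧ X1 ω = p.1} := by
      ext ω; simp [hYdef, Prod.ext_iff, and_comm]
    rw [hset, hcond]
  have key : ∀ g : ℕ × ℕ → ℝ, Integrable (fun ω => g (Y ω)) ℙ →
      (∫ ω, g (Y ω) ∂ℙ = ∑' p : ℕ × ℕ, (ν {p}).toReal * g p) ∧
        Summable (fun p : ℕ × ℕ => (ν {p}).toReal * g p) := by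
    intro g hg
    have hgm : Measurable g := measurable_of_countable g
    have hgi : Integrable g ν :=
      (integrable_map_measure hgm.aestronglyMeasurable hYm.aemeasurable).mpr hg
    constructor
    · rw [← integral_map hYm.aemeasurable hgm.aestronglyMeasurable,
        integral_countable' hgi]
      simp [smul_eq_mul]
      rfl
    · exact summable_meas_smul hgi
  have reduce : ∀ g : ℕ × ℕ → ℝ, ∀ c : ℕ → ℝ,
      (∀ n, ∑ k ∈ Finset.range (n + 1), g (n, k) * binomPMF n t k = c n) →
      Summable (fun p : ℕ × ℕ => (ν {p}).toReal * g p) →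
      ((∑' p : ℕ × ℕ, (ν {p}).toReal * g p) = ∑' n, pn n * c n) ∧
        Summable (fun n => pn n * c n) := by
    intro g c hc hsum
    have hfin : ∀ n, ∀ k ∉ Finset.range (n + 1), (ν {(n, k)}).toReal * g (n, k) = 0 := by
      intro n k hk
      rw [hν]
      simp only [Finset.mem_range, not_lt] at hk
      rw [binomPMF_eq_zero (by omega) t]
      ring
    have hinner : ∀ n, (∑' k, (ν {(n, k)}).toReal * g (n, k)) = pn n * c n := by
      intro n
      rw [tsum_eq_sum (hfin n), ← hc n, Finset.mul_sum]
      refine Finset.sum_congr rfl fun k _ => ?_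
      rw [hν]; ring
    have hsum1 : ∀ n, Summable fun k => (ν {(n, k)}).toReal * g (n, k) := fun n =>
      summable_of_ne_finset_zero (hfin n)
    constructor
    · rw [Summable.tsum_prod' hsum hsum1]
      exact tsum_congr hinner
    · exact ⟨_, hsum.hasSum.prod_fiberwise fun n => (hinner n) ▸ (hsum1 n).hasSum⟩
  -- first moment of X1 via the joint law
  obtain ⟨e1, s1⟩ := key (fun p => (p.1 : ℝ)) intX1
  obtain ⟨r1, rs1⟩ := reduce (fun p => (p.1 : ℝ)) (fun n => (n : ℝ))
    (fun n => by
      show (∑ k ∈ Finset.range (n + 1), (n : ℝ) * binomPMF n t k) = (n : ℝ)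
      rw [← Finset.mul_sum, binomPMF_sum, mul_one]) s1
  have hM1 : (∑' n, pn n * (n : ℝ)) = μd := by rw [← r1, ← e1]; exact hμ
  -- second moment of X1
  obtain ⟨e2, s2⟩ := key (fun p => (p.1 : ℝ) ^ 2) hint
  obtain ⟨r2, rs2⟩ := reduce (fun p => (p.1 : ℝ) ^ 2) (fun n => (n : ℝ) ^ 2)
    (fun n => by
      show (∑ k ∈ Finset.range (n + 1), (n : ℝ) ^ 2 * binomPMF n t k) = (n : ℝ) ^ 2
      rw [← Finset.mul_sum, binomPMF_sum, mul_one]) s2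
  have hM2 : (∑' n, pn n * (n : ℝ) ^ 2) = σd2 + μd ^ 2 := by
    rw [← r2, ← e2]; exact hI2
  -- E[Xt]
  obtain ⟨e3, s3⟩ := key (fun p => (p.2 : ℝ)) intXt
  obtain ⟨r3, _⟩ := reduce (fun p => (p.2 : ℝ)) (fun n => (n : ℝ) * t)
    (fun n => by
      show (∑ k ∈ Finset.range (n + 1), (k : ℝ) * binomPMF n t k) = (n : ℝ) * t
      exact binomPMF_sum_mul n t) s3
  have hEt : ∫ ω, (Xt ω : ℝ) ∂ℙ = t * μd := by
    rw [show (∫ ω, (Xt ω : ℝ) ∂ℙ) = ∫ ω, ((fun p : ℕ × ℕ => (p.2 : ℝ)) (Y ω)) ∂ℙ from rfl,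
      e3, r3]
    calc (∑' n, pn n * ((n : ℝ) * t)) = ∑' n, t * (pn n * (n : ℝ)) := by
          refine tsum_congr fun n => by ring
      _ = t * ∑' n, pn n * (n : ℝ) := tsum_mul_left
      _ = t * μd := by rw [hM1]
  -- E[Xt^2]
  obtain ⟨e4, s4⟩ := key (fun p => (p.2 : ℝ) ^ 2) intXt2
  obtain ⟨r4, _⟩ := reduce (fun p => (p.2 : ℝ) ^ 2)
    (fun n => (n : ℝ) * ((n : ℝ) - 1) * t ^ 2 + n * t)
    (fun n => by
      show (∑ k ∈ Finset.range (n + 1), (k : ℝ) ^ 2 * binomPMF n t k)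
        = (n : ℝ) * ((n : ℝ) - 1) * t ^ 2 + n * t
      exact binomPMF_sum_sq n t) s4
  have hEt2 : ∫ ω, (Xt ω : ℝ) ^ 2 ∂ℙ = t ^ 2 * (σd2 + μd ^ 2) + (t - t ^ 2) * μd := by
    rw [show (∫ ω, (Xt ω : ℝ) ^ 2 ∂ℙ)
        = ∫ ω, ((fun p : ℕ × ℕ => (p.2 : ℝ) ^ 2) (Y ω)) ∂ℙ from rfl, e4, r4]
    have hfe : (fun n : ℕ => pn n * ((n : ℝ) * ((n : ℝ) - 1) * t ^ 2 + n * t))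
        = fun n : ℕ => t ^ 2 * (pn n * (n : ℝ) ^ 2) + (t - t ^ 2) * (pn n * (n : ℝ)) := by
      funext n; ring
    rw [hfe, Summable.tsum_add (rs2.mul_left _) (rs1.mul_left _), tsum_mul_left, tsum_mul_left,
      hM1, hM2]
  -- E[X1 * Xt]
  obtain ⟨e5, s5⟩ := key (fun p => (p.1 : ℝ) * (p.2 : ℝ)) intX1Xt
  obtain ⟨r5, _⟩ := reduce (fun p => (p.1 : ℝ) * (p.2 : ℝ)) (fun n => (n : ℝ) ^ 2 * t)
    (fun n => by
      show (∑ k ∈ Finset.range (n + 1), (n : ℝ) * (k : ℝ) * binomPMF n t k)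
        = (n : ℝ) ^ 2 * t
      simp only [mul_assoc, ← Finset.mul_sum]
      rw [binomPMF_sum_mul]; ring) s5
  have hK : ∫ ω, (X1 ω : ℝ) * (Xt ω : ℝ) ∂ℙ = t * (σd2 + μd ^ 2) := by
    rw [show (∫ ω, (X1 ω : ℝ) * (Xt ω : ℝ) ∂ℙ)
        = ∫ ω, ((fun p : ℕ × ℕ => (p.1 : ℝ) * (p.2 : ℝ)) (Y ω)) ∂ℙ from rfl, e5, r5]
    calc (∑' n, pn n * ((n : ℝ) ^ 2 * t)) = ∑' n, t * (pn n * (n : ℝ) ^ 2) := by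
          refine tsum_congr fun n => by ring
      _ = t * ∑' n, pn n * (n : ℝ) ^ 2 := tsum_mul_left
      _ = t * (σd2 + μd ^ 2) := by rw [hM2]
  -- expansion of the quadratic objective
  have expand : ∀ a' c' : ℝ,
      ∫ ω, ((X1 ω : ℝ) - a' * (Xt ω : ℝ) - c') ^ 2 ∂ℙ
        = (σd2 + μd ^ 2) + a' ^ 2 * (t ^ 2 * (σd2 + μd ^ 2) + (t - t ^ 2) * μd)
          + c' ^ 2 - 2 * a' * (t * (σd2 + μd ^ 2)) - 2 * c' * μd
          + 2 * (a' * c') * (t * μd) := by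
    intro a' c'
    have hfun : (fun ω => ((X1 ω : ℝ) - a' * (Xt ω : ℝ) - c') ^ 2)
        = fun ω => (X1 ω : ℝ) ^ 2 + a' ^ 2 * (Xt ω : ℝ) ^ 2 + c' ^ 2
          - 2 * a' * ((X1 ω : ℝ) * (Xt ω : ℝ)) - 2 * c' * (X1 ω : ℝ)
          + 2 * (a' * c') * (Xt ω : ℝ) := by
      funext ω; ring
    have iA := hint
    have iB : Integrable (fun ω => a' ^ 2 * (Xt ω : ℝ) ^ 2) ℙ := intXt2.const_mul _
    have iC : Integrable (fun _ : Ω => c' ^ 2) ℙ := integrable_const _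
    have iD : Integrable (fun ω => 2 * a' * ((X1 ω : ℝ) * (Xt ω : ℝ))) ℙ :=
      intX1Xt.const_mul _
    have iE : Integrable (fun ω => 2 * c' * (X1 ω : ℝ)) ℙ := intX1.const_mul _
    have iF : Integrable (fun ω => 2 * (a' * c') * (Xt ω : ℝ)) ℙ := intXt.const_mul _
    have iAB : Integrable (fun ω => (X1 ω : ℝ) ^ 2 + a' ^ 2 * (Xt ω : ℝ) ^ 2) ℙ :=
      iA.add iB
    have iABC : Integrable
        (fun ω => (X1 ω : ℝ) ^ 2 + a' ^ 2 * (Xt ω : ℝ) ^ 2 + c' ^ 2) ℙ := iAB.add iC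
    have iABCD : Integrable (fun ω => (X1 ω : ℝ) ^ 2 + a' ^ 2 * (Xt ω : ℝ) ^ 2 + c' ^ 2
        - 2 * a' * ((X1 ω : ℝ) * (Xt ω : ℝ))) ℙ := iABC.sub iD
    have iABCDE : Integrable (fun ω => (X1 ω : ℝ) ^ 2 + a' ^ 2 * (Xt ω : ℝ) ^ 2 + c' ^ 2
        - 2 * a' * ((X1 ω : ℝ) * (Xt ω : ℝ)) - 2 * c' * (X1 ω : ℝ)) ℙ := iABCD.sub iE
    rw [hfun,
      integral_add iABCDE iF,
      integral_sub iABCD iE,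
      integral_sub iABC iD,
      integral_add iAB iC,
      integral_add iA iB,
      integral_const_mul, integral_const_mul, integral_const_mul, integral_const_mul, integral_const,
      hI2, hEt2, hK, hEt, hμ]
    simp only [Measure.real, measure_univ, ENNReal.toReal_one, smul_eq_mul, one_mul]
  -- final algebra
  rw [expand, expand]
  set A : ℝ := σd2 / (μd * (1 - t) + σd2 * t) with hAdef
  have hD : 0 < μd * (1 - t) + σd2 * t := by
    have h1 : 0 < μd * (1 - t) := mul_pos hμpos (by linarith)
    nlinarith [mul_nonneg hs_nonneg ht0]
  have hA : A * (μd * (1 - t) + σd2 * t) = σd2 := div_mul_cancel₀ _ hD.ne'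
  have identity :
      (σd2 + μd ^ 2) + a ^ 2 * (t ^ 2 * (σd2 + μd ^ 2) + (t - t ^ 2) * μd)
        + (b * μd) ^ 2 - 2 * a * (t * (σd2 + μd ^ 2)) - 2 * (b * μd) * μd
        + 2 * (a * (b * μd)) * (t * μd)
      = ((σd2 + μd ^ 2) + A ^ 2 * (t ^ 2 * (σd2 + μd ^ 2) + (t - t ^ 2) * μd)
        + ((1 - t * A) * μd) ^ 2 - 2 * A * (t * (σd2 + μd ^ 2))
        - 2 * ((1 - t * A) * μd) * μd + 2 * (A * ((1 - t * A) * μd)) * (t * μd))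
        + t * (μd * (1 - t) + σd2 * t) * (a - A) ^ 2
        + (b * μd - (1 - a * t) * μd) ^ 2 := by
    linear_combination (2 * t * (a - A)) * hA
  rw [identity]
  have h1 : 0 ≤ t * (μd * (1 - t) + σd2 * t) * (a - A) ^ 2 :=
    mul_nonneg (mul_nonneg ht0 hD.le) (sq_nonneg _)
  have h2 : 0 ≤ (b * μd - (1 - a * t) * μd) ^ 2 := sq_nonneg _
  linarith
end
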